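/- Discrete entropy production: assume the first law dе_i = v_i · dv_i + T_i dη_i + (p_i/ρ_i²) dρ_i holds along trajectories with temperature T_i > 0, and the semi-discrete equations dρ_i/dt = -ρ_i Tr L_i, ρ_i dv_i/dt = f_i, ρ_i de_i/dt = f_i · v_i + L_i : 𝕋_i with 𝕋_i = -p_i I + S_i and S_i = 2(μ_i + μ_i^art)(D_i - (1/3)(Tr D_i) I), D_i = (L_i + L_iᵀ)/2. Then dη_i/dt = (2/(ρ_i T_i))(μ_i + μ_i^art) ‖D_i - (1/3)(Tr D_i)I‖_F² ≥ 0 whenever μ_i + μ_i^art ≥ 0. -/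

import Mathlib

open scoped RealInnerProductSpace

/-- Frobenius inner product of `3×3` matrices. -/
def frob3 (Amat Bmat : Matrix (Fin 3) (Fin 3) ℝ) : ℝ :=
  ∑ k, ∑ l, Amat k l * Bmat k l

/-- Discrete entropy production: with the first law and the semi-discrete equations,
`dη/dt = (2/(ρT))(μ + μ_art) ‖D - (1/3)(Tr D)I‖_F² ≥ 0` when `μ + μ_art ≥ 0`. -/
theorem discrete_entropy_production
    (ρ e η Ttemp p μ μart : ℝ → ℝ)
    (v f : ℝ → EuclideanSpace ℝ (Fin 3))
    (L : ℝ → Matrix (Fin 3) (Fin 3) ℝ)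
    (ρ' e' η' : ℝ → ℝ) (v' : ℝ → EuclideanSpace ℝ (Fin 3))
    (D S 𝕋 Dev : ℝ → Matrix (Fin 3) (Fin 3) ℝ)
    (hρpos : ∀ t, 0 < ρ t) (hTpos : ∀ t, 0 < Ttemp t)
    (hρ : ∀ t, HasDerivAt ρ (ρ' t) t)
    (he : ∀ t, HasDerivAt e (e' t) t)
    (hη : ∀ t, HasDerivAt η (η' t) t)
    (hv : ∀ t, HasDerivAt v (v' t) t)
    -- definitions of D, its deviatoric part, S and 𝕋
    (hD : ∀ t, D t = (2:ℝ)⁻¹ • (L t + (L t).transpose))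
    (hDev : ∀ t, Dev t = D t - ((Matrix.trace (D t)) / 3) • (1 : Matrix (Fin 3) (Fin 3) ℝ))
    (hS : ∀ t, S t = (2 * (μ t + μart t)) • Dev t)
    (h𝕋 : ∀ t, 𝕋 t = -(p t) • (1 : Matrix (Fin 3) (Fin 3) ℝ) + S t)
    -- first law of thermodynamics along the trajectory
    (hfirst : ∀ t, e' t = ⟪v t, v' t⟫ + Ttemp t * η' t + (p t / (ρ t)^2) * ρ' t)
    -- semi-discrete equations
    (hmass : ∀ t, ρ' t = -(ρ t * Matrix.trace (L t)))
    (hmom : ∀ t, ρ t • v' t = f t)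
    (hen : ∀ t, ρ t * e' t = ⟪f t, v t⟫ + frob3 (L t) (𝕋 t))
    (hμ : ∀ t, 0 ≤ μ t + μart t) :
    ∀ t, η' t = (2 / (ρ t * Ttemp t)) * (μ t + μart t) * frob3 (Dev t) (Dev t)
      ∧ 0 ≤ η' t := by
  intro t
  have hρ0 : ρ t ≠ 0 := (hρpos t).ne'
  have hT0 : Ttemp t ≠ 0 := (hTpos t).ne'
  -- momentum: ⟪f, v⟫ = ρ * ⟪v, v'⟫
  have hfv : ⟪f t, v t⟫ = ρ t * ⟪v t, v' t⟫ := by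
    rw [← hmom t, real_inner_smul_left, real_inner_comm]
  -- key identity: ρ T η' = frob3 L S
  have key : ρ t * Ttemp t * η' t = frob3 (L t) (S t) := by
    have h1 := hen t
    rw [hfirst t, hmass t, hfv, h𝕋 t] at h1
    have hLpI : frob3 (L t) (-(p t) • (1 : Matrix (Fin 3) (Fin 3) ℝ) + S t)
        = -(p t) * Matrix.trace (L t) + frob3 (L t) (S t) := by
      simp [frob3, Matrix.trace, Matrix.diag, Matrix.one_apply, Fin.sum_univ_three]
      ring
    rw [hLpI] at h1
    have h2 : (ρ t)^2 * (ρ t * Ttemp t * η' t) = (ρ t)^2 * frob3 (L t) (S t) := by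
      field_simp at h1
      linear_combination (ρ t)^2 * h1
    exact mul_left_cancel₀ (pow_ne_zero 2 hρ0) h2
  -- algebra: frob3 L S = 2(μ+μart) * frob3 Dev Dev
  have halg : frob3 (L t) (S t) = 2 * (μ t + μart t) * frob3 (Dev t) (Dev t) := by
    rw [hS t, hDev t, hD t]
    simp [frob3, Matrix.trace, Matrix.diag, Matrix.one_apply, Fin.sum_univ_three,
      Matrix.smul_apply, Matrix.sub_apply, Matrix.add_apply, Matrix.transpose_apply,
      smul_eq_mul]
    ring
  have hDev0 : 0 ≤ frob3 (Dev t) (Dev t) := by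
    apply Finset.sum_nonneg
    intro k _
    exact Finset.sum_nonneg fun l _ => mul_self_nonneg _
  have hη'eq : η' t = (2 / (ρ t * Ttemp t)) * (μ t + μart t) * frob3 (Dev t) (Dev t) := by
    rw [halg] at key
    field_simp
    linear_combination key
  refine ⟨hη'eq, ?_⟩
  rw [hη'eq]
  have h2 : 0 ≤ 2 / (ρ t * Ttemp t) := by
    have := hρpos t; have := hTpos t; positivity
  exact mul_nonneg (mul_nonneg h2 (hμ t)) hDev0
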